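/- Define f(x) = (2/3)x·g(x) where g(x) = (2/3 − 2π/(9√3))x² − (8/3)x + 2π/√3 for 0 ≤ x ≤ 1; g(x) = −(4/√3)(2x²/3 + 1)·arcsin(√3/(2x)) + (2π/(3√3))x² − 2√(4x²−3) + 10π/(3√3) for 1 ≤ x ≤ √3; g(x) = (4/√3)(x²/3 + 4)·arcsin(√3/x) − (4π/(9√3) + 2/3)x² + (20/3)√(x²−3) − 16π/(3√3) − 4 for √3 ≤ x ≤ 2. Define F(d) = (1/3)(1/3 − π/(9√3))d⁴ − (16/27)d³ + (2π/(3√3))d² for 0 ≤ d ≤ 1; F(d) = −(4/(3√3))(d⁴/3 + d²)·arcsin(√3/(2d)) + (π/(9√3))d⁴ + (10π/(9√3))d² − ((26d² + 3)/54)√(4d²−3) + 1/18 for 1 ≤ d ≤ √3; F(d) = (2/(3√3))(d⁴/3 + 8d²)·arcsin(√3/d) − (2π/(27√3) + 1/9)d⁴ − (16π/(9√3) + 4/3)d² + ((14d² + 12)/9)√(d²−3) + 5/9 for √3 ≤ d ≤ 2. Then for every d with 0 ≤ d ≤ 2, the integral ∫₀^d f(x) dx equals F(d); in particular ∫₀^2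 f(x) dx = 1. -/

import Mathlib

open MeasureTheory Real Set

noncomputable section

def gHI (d : ℝ) : ℝ :=
  if d < 0 then 0
  else if d ≤ 1 then
    (2/3 - 2*π/(9*Real.sqrt 3)) * d^2 - (8/3)*d + 2*π/Real.sqrt 3
  else if d ≤ Real.sqrt 3 then
    -(4/Real.sqrt 3) * (2*d^2/3 + 1) * arcsin (Real.sqrt 3/(2*d))
      + (2*π/(3*Real.sqrt 3)) * d^2 - 2 * Real.sqrt (4*d^2 - 3) + 10*π/(3*Real.sqrt 3)
  else if d ≤ 2 then
    (4/Real.sqrt 3) * (d^2/3 + 4) * arcsin (Real.sqrt 3/d)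
      - (4*π/(9*Real.sqrt 3) + 2/3) * d^2 + (20/3) * Real.sqrt (d^2 - 3)
      - 16*π/(3*Real.sqrt 3) - 4
  else 0

/-- f_{H_I}(d) = (2/3)d·g(d). -/
def fHI (d : ℝ) : ℝ := (2/3) * d * gHI d

def FHI (d : ℝ) : ℝ :=
  if d ≤ 1 then
    (1/3) * (1/3 - π/(9*Real.sqrt 3)) * d^4 - (16/27)*d^3 + (2*π/(3*Real.sqrt 3)) * d^2
  else if d ≤ Real.sqrt 3 then
    -(4/(3*Real.sqrt 3)) * (d^4/3 + d^2) * arcsin (Real.sqrt 3/(2*d))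
      + (π/(9*Real.sqrt 3)) * d^4 + (10*π/(9*Real.sqrt 3)) * d^2
      - ((26*d^2 + 3)/54) * Real.sqrt (4*d^2 - 3) + 1/18
  else
    (2/(3*Real.sqrt 3)) * (d^4/3 + 8*d^2) * arcsin (Real.sqrt 3/d)
      - (2*π/(27*Real.sqrt 3) + 1/9) * d^4 - (16*π/(9*Real.sqrt 3) + 4/3) * d^2
      + ((14*d^2 + 12)/9) * Real.sqrt (d^2 - 3) + 5/9

namespace Stmt16Aux

lemma sqrt3_pos : (0:ℝ) < Real.sqrt 3 := Real.sqrt_pos.2 (by norm_num)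
lemma sqrt3_lt_two : Real.sqrt 3 < 2 := by
  rw [show (2:ℝ) = Real.sqrt 4 by rw [show (4:ℝ)=2^2 by norm_num, Real.sqrt_sq]; norm_num]
  exact Real.sqrt_lt_sqrt (by norm_num) (by norm_num)
lemma one_lt_sqrt3 : (1:ℝ) < Real.sqrt 3 := by
  rw [show (1:ℝ) = Real.sqrt 1 by simp]
  exact Real.sqrt_lt_sqrt (by norm_num) (by norm_num)
lemma sq_sqrt3 : Real.sqrt 3 ^ 2 = 3 := Real.sq_sqrt (by norm_num)

lemma arcsin_s32 : Real.arcsin (Real.sqrt 3 / 2) = π/3 := by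
  rw [← Real.sin_pi_div_three, Real.arcsin_sin] <;> nlinarith [Real.pi_pos]
lemma arcsin_half : Real.arcsin (1/2 : ℝ) = π/6 := by
  rw [← Real.sin_pi_div_six, Real.arcsin_sin] <;> nlinarith [Real.pi_pos]

/-! the three branches -/

def g1 (d : ℝ) : ℝ := (2/3 - 2*π/(9*Real.sqrt 3)) * d^2 - (8/3)*d + 2*π/Real.sqrt 3
def g2 (d : ℝ) : ℝ :=
  -(4/Real.sqrt 3) * (2*d^2/3 + 1) * Real.arcsin (Real.sqrt 3/(2*d))
    + (2*π/(3*Real.sqrt 3)) * d^2 - 2 * Real.sqrt (4*d^2 - 3) + 10*π/(3*Real.sqrt 3)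
def g3 (d : ℝ) : ℝ :=
  (4/Real.sqrt 3) * (d^2/3 + 4) * Real.arcsin (Real.sqrt 3/d)
    - (4*π/(9*Real.sqrt 3) + 2/3) * d^2 + (20/3) * Real.sqrt (d^2 - 3)
    - 16*π/(3*Real.sqrt 3) - 4

def F1 (d : ℝ) : ℝ :=
  (1/3) * (1/3 - π/(9*Real.sqrt 3)) * d^4 - (16/27)*d^3 + (2*π/(3*Real.sqrt 3)) * d^2
def F2 (d : ℝ) : ℝ :=
  -(4/(3*Real.sqrt 3)) * (d^4/3 + d^2) * Real.arcsin (Real.sqrt 3/(2*d))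
    + (π/(9*Real.sqrt 3)) * d^4 + (10*π/(9*Real.sqrt 3)) * d^2
    - ((26*d^2 + 3)/54) * Real.sqrt (4*d^2 - 3) + 1/18
def F3 (d : ℝ) : ℝ :=
  (2/(3*Real.sqrt 3)) * (d^4/3 + 8*d^2) * Real.arcsin (Real.sqrt 3/d)
    - (2*π/(27*Real.sqrt 3) + 1/9) * d^4 - (16*π/(9*Real.sqrt 3) + 4/3) * d^2
    + ((14*d^2 + 12)/9) * Real.sqrt (d^2 - 3) + 5/9

lemma fHI_eq1 {x : ℝ} (h0 : 0 ≤ x) (h1 : x ≤ 1) : fHI x = (2/3)*x*g1 x := by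
  simp only [fHI, gHI, g1, not_lt.2 h0, if_false, if_pos h1]

lemma g1_one_eq_g2_one : g1 1 = g2 1 := by
  have hs := sqrt3_pos
  have e1 : Real.sqrt 3 / (2*(1:ℝ)) = Real.sqrt 3 / 2 := by norm_num
  have e2 : (4*(1:ℝ)^2 - 3) = 1 := by norm_num
  simp only [g1, g2, e1, e2, arcsin_s32, Real.sqrt_one]
  field_simp
  ring

lemma e1aux : Real.sqrt 3 / (2*Real.sqrt 3) = (1/2 : ℝ) := by
  rw [eq_div_iff (by norm_num : (2:ℝ) ≠ 0), div_mul_eq_mul_div,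
    div_eq_iff (by positivity : (2:ℝ) * Real.sqrt 3 ≠ 0)]
  ring
lemma e2aux : Real.sqrt 3 / Real.sqrt 3 = (1:ℝ) := div_self (ne_of_gt sqrt3_pos)
lemma e3aux : Real.sqrt (4*(Real.sqrt 3)^2 - 3) = 3 := by
  rw [sq_sqrt3, show (4*(3:ℝ)-3) = 3^2 by norm_num, Real.sqrt_sq (by norm_num : (0:ℝ) ≤ 3)]
lemma e4aux : Real.sqrt ((Real.sqrt 3)^2 - 3) = 0 := by
  rw [sq_sqrt3, sub_self, Real.sqrt_zero]
lemma e6aux : Real.sqrt 3 ^ 4 = 9 := by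
  rw [show (4:ℕ)=2*2 from rfl, pow_mul, sq_sqrt3]; norm_num

lemma g2_s3_eq_g3_s3 : g2 (Real.sqrt 3) = g3 (Real.sqrt 3) := by
  have hs := sqrt3_pos
  unfold g2 g3
  rw [e1aux, e2aux, e3aux, e4aux, arcsin_half, Real.arcsin_one]
  simp only [sq_sqrt3]
  field_simp
  ring

lemma fHI_eq2 {x : ℝ} (h0 : 1 ≤ x) (h1 : x ≤ Real.sqrt 3) : fHI x = (2/3)*x*g2 x := by
  rcases eq_or_lt_of_le h0 with heq | hlt
  · rw [fHI_eq1 (by linarith) (by linarith [heq]), ← heq, g1_one_eq_g2_one]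
  · simp only [fHI, gHI, g2, not_lt.2 (by linarith : (0:ℝ) ≤ x), if_false,
      not_le.2 hlt, if_pos h1]

lemma fHI_eq3 {x : ℝ} (h0 : Real.sqrt 3 ≤ x) (h1 : x ≤ 2) : fHI x = (2/3)*x*g3 x := by
  rcases eq_or_lt_of_le h0 with heq | hlt
  · rw [fHI_eq2 (by linarith [one_lt_sqrt3, heq]) (le_of_eq heq.symm), ← heq,
      g2_s3_eq_g3_s3]
  · have h0' : (0:ℝ) ≤ x := by linarith [sqrt3_pos]
    have h1' : ¬ x ≤ 1 := by push_neg; linarith [one_lt_sqrt3]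
    simp only [fHI, gHI, g3, not_lt.2 h0', if_false, h1', not_le.2 hlt, if_pos h1]

/-! derivative helpers -/

lemma hasDerivAt_arcsin2 {x : ℝ} (hx : 1 < x) :
    HasDerivAt (fun y : ℝ => Real.arcsin (Real.sqrt 3 / (2*y)))
      (-(Real.sqrt 3) / (x * Real.sqrt (4*x^2 - 3))) x := by
  have hx0 : (0:ℝ) < x := by linarith
  have hu1 : Real.sqrt 3 / (2*x) < 1 := by
    rw [div_lt_one (by linarith)]
    have := sqrt3_lt_two; linarith
  have hu0 : 0 < Real.sqrt 3 / (2*x) := div_pos sqrt3_pos (by linarith)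
  have hr0 : (0:ℝ) < 4*x^2 - 3 := by nlinarith
  have hrpos : 0 < Real.sqrt (4*x^2-3) := Real.sqrt_pos.2 hr0
  have hinner : HasDerivAt (fun y : ℝ => Real.sqrt 3 / (2*y))
      ((0 * (2*x) - Real.sqrt 3 * (2*1)) / (2*x)^2) x :=
    (hasDerivAt_const x (Real.sqrt 3)).div ((hasDerivAt_id x).const_mul 2) (by positivity)
  have hA := (Real.hasDerivAt_arcsin (by linarith) (ne_of_lt hu1)).comp x hinner
  have key : Real.sqrt (1 - (Real.sqrt 3 / (2*x))^2) = Real.sqrt (4*x^2-3) / (2*x) := by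
    rw [show 1 - (Real.sqrt 3/(2*x))^2 = (4*x^2-3)/(2*x)^2 by
      rw [div_pow, sq_sqrt3]; field_simp; ring]
    rw [Real.sqrt_div hr0.le, Real.sqrt_sq (by linarith)]
  refine hA.congr_deriv (Eq.symm ?_)
  rw [key]; field_simp; ring

lemma hasDerivAt_sqrtR2 {x : ℝ} (hx : 1 < x) :
    HasDerivAt (fun y : ℝ => Real.sqrt (4*y^2 - 3)) (4*x / Real.sqrt (4*x^2-3)) x := by
  have hr0 : (0:ℝ) < 4*x^2 - 3 := by nlinarith
  have hrpos : 0 < Real.sqrt (4*x^2-3) := Real.sqrt_pos.2 hr0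
  have hinner : HasDerivAt (fun y : ℝ => 4*y^2 - 3) (4*(2*x)) x := by
    simpa using ((hasDerivAt_pow 2 x).const_mul 4).sub_const 3
  have := (Real.hasDerivAt_sqrt (ne_of_gt hr0)).comp x hinner
  refine this.congr_deriv (Eq.symm ?_)
  field_simp

lemma hasDerivAt_arcsin3 {x : ℝ} (hx : Real.sqrt 3 < x) :
    HasDerivAt (fun y : ℝ => Real.arcsin (Real.sqrt 3 / y))
      (-(Real.sqrt 3) / (x * Real.sqrt (x^2 - 3))) x := by
  have hx0 : (0:ℝ) < x := lt_trans sqrt3_pos hx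
  have hu1 : Real.sqrt 3 / x < 1 := by rw [div_lt_one hx0]; exact hx
  have hu0 : 0 < Real.sqrt 3 / x := div_pos sqrt3_pos hx0
  have hr0 : (0:ℝ) < x^2 - 3 := by nlinarith [sq_sqrt3, sqrt3_pos]
  have hrpos : 0 < Real.sqrt (x^2-3) := Real.sqrt_pos.2 hr0
  have hinner : HasDerivAt (fun y : ℝ => Real.sqrt 3 / y)
      ((0 * x - Real.sqrt 3 * 1) / x^2) x :=
    (hasDerivAt_const x (Real.sqrt 3)).div (hasDerivAt_id x) (ne_of_gt hx0)
  have hA := (Real.hasDerivAt_arcsin (by linarith) (ne_of_lt hu1)).comp x hinner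
  have key : Real.sqrt (1 - (Real.sqrt 3 / x)^2) = Real.sqrt (x^2-3) / x := by
    rw [show 1 - (Real.sqrt 3/x)^2 = (x^2-3)/x^2 by
      rw [div_pow, sq_sqrt3]; field_simp]
    rw [Real.sqrt_div hr0.le, Real.sqrt_sq hx0.le]
  refine hA.congr_deriv (Eq.symm ?_)
  rw [key]; field_simp; ring

lemma hasDerivAt_sqrtR3 {x : ℝ} (hx : Real.sqrt 3 < x) :
    HasDerivAt (fun y : ℝ => Real.sqrt (y^2 - 3)) (x / Real.sqrt (x^2-3)) x := by
  have hx0 : (0:ℝ) < x := lt_trans sqrt3_pos hx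
  have hr0 : (0:ℝ) < x^2 - 3 := by nlinarith [sq_sqrt3, sqrt3_pos]
  have hrpos : 0 < Real.sqrt (x^2-3) := Real.sqrt_pos.2 hr0
  have hinner : HasDerivAt (fun y : ℝ => y^2 - 3) (2*x) x := by
    simpa using (hasDerivAt_pow 2 x).sub_const 3
  have := (Real.hasDerivAt_sqrt (ne_of_gt hr0)).comp x hinner
  refine this.congr_deriv (Eq.symm ?_)
  field_simp

/-! derivatives of the antiderivative pieces -/

lemma hasDerivAt_F1 (x : ℝ) : HasDerivAt F1 ((2/3)*x*g1 x) x := by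
  have h : HasDerivAt F1
      ((1/3) * (1/3 - π/(9*Real.sqrt 3)) * (4*x^3) - (16/27)*(3*x^2)
        + (2*π/(3*Real.sqrt 3)) * (2*x)) x := by
    apply HasDerivAt.add
    apply HasDerivAt.sub
    · have := (hasDerivAt_pow 4 x).const_mul ((1/3) * (1/3 - π/(9*Real.sqrt 3)))
      refine this.congr_deriv (Eq.symm ?_) <;> push_cast <;> ring
    · have := (hasDerivAt_pow 3 x).const_mul (16/27 : ℝ)
      refine this.congr_deriv (Eq.symm ?_) <;> push_cast <;> ring
    · have := (hasDerivAt_pow 2 x).const_mul (2*π/(3*Real.sqrt 3))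
      refine this.congr_deriv (Eq.symm ?_) <;> push_cast <;> ring
  convert h using 1
  have hs := sqrt3_pos
  unfold g1
  field_simp
  ring

lemma hasDerivAt_F2 {x : ℝ} (hx : 1 < x) : HasDerivAt F2 ((2/3)*x*g2 x) x := by
  have hs := sqrt3_pos
  have hx0 : (0:ℝ) < x := by linarith
  have hr0 : (0:ℝ) < 4*x^2 - 3 := by nlinarith
  have hrpos : 0 < Real.sqrt (4*x^2-3) := Real.sqrt_pos.2 hr0
  have hpoly : HasDerivAt (fun d : ℝ => -(4/(3*Real.sqrt 3)) * (d^4/3 + d^2))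
      (-(4/(3*Real.sqrt 3)) * (4*x^3/3 + 2*x)) x := by
    have := (((hasDerivAt_pow 4 x).div_const 3).add (hasDerivAt_pow 2 x)).const_mul
      (-(4/(3*Real.sqrt 3)))
    refine this.congr_deriv (Eq.symm ?_) <;> push_cast <;> ring
  have hprod := hpoly.mul (hasDerivAt_arcsin2 hx)
  have h2 : HasDerivAt (fun d : ℝ => (π/(9*Real.sqrt 3)) * d^4)
      ((π/(9*Real.sqrt 3)) * (4*x^3)) x := by
    have := (hasDerivAt_pow 4 x).const_mul (π/(9*Real.sqrt 3))
    refine this.congr_deriv (Eq.symm ?_) <;> push_cast <;> ring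
  have h3 : HasDerivAt (fun d : ℝ => (10*π/(9*Real.sqrt 3)) * d^2)
      ((10*π/(9*Real.sqrt 3)) * (2*x)) x := by
    have := (hasDerivAt_pow 2 x).const_mul (10*π/(9*Real.sqrt 3))
    refine this.congr_deriv (Eq.symm ?_) <;> push_cast <;> ring
  have h4poly : HasDerivAt (fun d : ℝ => (26*d^2+3)/54) (52*x/54) x := by
    have := (((hasDerivAt_pow 2 x).const_mul 26).add_const 3).div_const 54
    refine this.congr_deriv (Eq.symm ?_) <;> push_cast <;> ring
  have h4 := h4poly.mul (hasDerivAt_sqrtR2 hx)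
  have htot := ((((hprod.add h2).add h3).sub h4).add_const (1/18 : ℝ))
  have : F2 = fun d : ℝ =>
      -(4/(3*Real.sqrt 3)) * (d^4/3 + d^2) * Real.arcsin (Real.sqrt 3/(2*d))
        + (π/(9*Real.sqrt 3)) * d^4 + (10*π/(9*Real.sqrt 3)) * d^2
        - ((26*d^2 + 3)/54) * Real.sqrt (4*d^2 - 3) + 1/18 := rfl
  rw [this]
  refine htot.congr_deriv (Eq.symm ?_)
  set r := Real.sqrt (4*x^2-3) with hrdef
  have hr : r^2 = 4*x^2-3 := Real.sq_sqrt hr0.le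
  unfold g2
  rw [← hrdef]
  field_simp
  linear_combination (-1620 * Real.sqrt 3) * hr

lemma hasDerivAt_F3 {x : ℝ} (hx : Real.sqrt 3 < x) : HasDerivAt F3 ((2/3)*x*g3 x) x := by
  have hs := sqrt3_pos
  have hx0 : (0:ℝ) < x := lt_trans sqrt3_pos hx
  have hx1 : (1:ℝ) < x := lt_trans one_lt_sqrt3 hx
  have hr0 : (0:ℝ) < x^2 - 3 := by nlinarith [sq_sqrt3, sqrt3_pos]
  have hrpos : 0 < Real.sqrt (x^2-3) := Real.sqrt_pos.2 hr0
  have hpoly : HasDerivAt (fun d : ℝ => (2/(3*Real.sqrt 3)) * (d^4/3 + 8*d^2))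
      ((2/(3*Real.sqrt 3)) * (4*x^3/3 + 16*x)) x := by
    have := (((hasDerivAt_pow 4 x).div_const 3).add
      ((hasDerivAt_pow 2 x).const_mul 8)).const_mul (2/(3*Real.sqrt 3))
    refine this.congr_deriv (Eq.symm ?_) <;> push_cast <;> ring
  have hprod := hpoly.mul (hasDerivAt_arcsin3 hx)
  have h2 : HasDerivAt (fun d : ℝ => (2*π/(27*Real.sqrt 3) + 1/9) * d^4)
      ((2*π/(27*Real.sqrt 3) + 1/9) * (4*x^3)) x := by
    have := (hasDerivAt_pow 4 x).const_mul (2*π/(27*Real.sqrt 3) + 1/9)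
    refine this.congr_deriv (Eq.symm ?_) <;> push_cast <;> ring
  have h3 : HasDerivAt (fun d : ℝ => (16*π/(9*Real.sqrt 3) + 4/3) * d^2)
      ((16*π/(9*Real.sqrt 3) + 4/3) * (2*x)) x := by
    have := (hasDerivAt_pow 2 x).const_mul (16*π/(9*Real.sqrt 3) + 4/3)
    refine this.congr_deriv (Eq.symm ?_) <;> push_cast <;> ring
  have h4poly : HasDerivAt (fun d : ℝ => (14*d^2+12)/9) (28*x/9) x := by
    have := (((hasDerivAt_pow 2 x).const_mul 14).add_const 12).div_const 9
    refine this.congr_deriv (Eq.symm ?_) <;> push_cast <;> ring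
  have h4 := h4poly.mul (hasDerivAt_sqrtR3 hx)
  have htot := ((((hprod.sub h2).sub h3).add h4).add_const (5/9 : ℝ))
  have : F3 = fun d : ℝ =>
      (2/(3*Real.sqrt 3)) * (d^4/3 + 8*d^2) * Real.arcsin (Real.sqrt 3/d)
        - (2*π/(27*Real.sqrt 3) + 1/9) * d^4 - (16*π/(9*Real.sqrt 3) + 4/3) * d^2
        + ((14*d^2 + 12)/9) * Real.sqrt (d^2 - 3) + 5/9 := rfl
  rw [this]
  refine htot.congr_deriv (Eq.symm ?_)
  set r := Real.sqrt (x^2-3) with hrdef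
  have hr : r^2 = x^2-3 := Real.sq_sqrt hr0.le
  unfold g3
  rw [← hrdef]
  field_simp
  linear_combination (2916 * Real.sqrt 3) * hr

/-! values at the junction points -/

lemma F1_zero : F1 0 = 0 := by simp [F1]

lemma F1_one_eq_F2_one : F1 1 = F2 1 := by
  have hs := sqrt3_pos
  have e1 : Real.sqrt 3 / (2*(1:ℝ)) = Real.sqrt 3 / 2 := by norm_num
  have e2 : (4*(1:ℝ)^2 - 3) = 1 := by norm_num
  simp only [F1, F2, e1, e2, arcsin_s32, Real.sqrt_one]
  field_simp
  ring

lemma F2_s3_eq_F3_s3 : F2 (Real.sqrt 3) = F3 (Real.sqrt 3) := by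
  have hs := sqrt3_pos
  unfold F2 F3
  rw [e1aux, e2aux, e3aux, e4aux, arcsin_half, Real.arcsin_one]
  simp only [sq_sqrt3, e6aux]
  field_simp
  ring

lemma F3_two : F3 2 = 1 := by
  have hs := sqrt3_pos
  have e1 : ((2:ℝ)^2 - 3) = 1 := by norm_num
  simp only [F3, e1, Real.sqrt_one, arcsin_s32]
  field_simp
  ring

/-! continuity of the integrand on the pieces -/

lemma contOn_piece1 : ContinuousOn (fun x : ℝ => (2/3)*x*g1 x) (Icc 0 1) := by
  apply Continuous.continuousOn
  unfold g1
  fun_prop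

lemma contOn_piece2 : ContinuousOn (fun x : ℝ => (2/3)*x*g2 x) (Icc 1 (Real.sqrt 3)) := by
  have harcsin : ContinuousOn (fun d : ℝ => Real.arcsin (Real.sqrt 3/(2*d)))
      (Icc 1 (Real.sqrt 3)) := by
    apply Real.continuous_arcsin.comp_continuousOn
    apply ContinuousOn.div continuousOn_const (by fun_prop)
    intro d hd
    have := hd.1
    positivity
  have hsq : Continuous (fun d : ℝ => Real.sqrt (4*d^2-3)) := by fun_prop
  unfold g2
  apply ContinuousOn.mul (by fun_prop)
  apply ContinuousOn.add
  apply ContinuousOn.sub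
  apply ContinuousOn.add
  · exact (continuousOn_const.mul (by fun_prop)).mul harcsin
  · fun_prop
  · exact continuousOn_const.mul hsq.continuousOn
  · exact continuousOn_const

lemma contOn_piece3 : ContinuousOn (fun x : ℝ => (2/3)*x*g3 x) (Icc (Real.sqrt 3) 2) := by
  have harcsin : ContinuousOn (fun d : ℝ => Real.arcsin (Real.sqrt 3/d))
      (Icc (Real.sqrt 3) 2) := by
    apply Real.continuous_arcsin.comp_continuousOn
    apply ContinuousOn.div continuousOn_const (continuous_id.continuousOn)
    intro d hd
    exact ne_of_gt (lt_of_lt_of_le sqrt3_pos hd.1)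
  have hsq : Continuous (fun d : ℝ => Real.sqrt (d^2-3)) := by fun_prop
  unfold g3
  apply ContinuousOn.mul (by fun_prop)
  apply ContinuousOn.sub
  apply ContinuousOn.sub
  apply ContinuousOn.add
  apply ContinuousOn.sub
  · exact (continuousOn_const.mul (by fun_prop)).mul harcsin
  · fun_prop
  · exact continuousOn_const.mul hsq.continuousOn
  · exact continuousOn_const
  · exact continuousOn_const

/-! integrability of fHI on the pieces -/

lemma intgr1 {a b : ℝ} (ha : 0 ≤ a) (hab : a ≤ b) (hb : b ≤ 1) :
    IntervalIntegrable fHI volume a b := by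
  apply ContinuousOn.intervalIntegrable
  rw [uIcc_of_le hab]
  apply (contOn_piece1.mono (Icc_subset_Icc ha hb)).congr
  intro x hx
  exact fHI_eq1 (by linarith [hx.1]) (by linarith [hx.2])

lemma intgr2 {a b : ℝ} (ha : 1 ≤ a) (hab : a ≤ b) (hb : b ≤ Real.sqrt 3) :
    IntervalIntegrable fHI volume a b := by
  apply ContinuousOn.intervalIntegrable
  rw [uIcc_of_le hab]
  apply (contOn_piece2.mono (Icc_subset_Icc ha hb)).congr
  intro x hx
  exact fHI_eq2 (by linarith [hx.1]) (by linarith [hx.2])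

lemma intgr3 {a b : ℝ} (ha : Real.sqrt 3 ≤ a) (hab : a ≤ b) (hb : b ≤ 2) :
    IntervalIntegrable fHI volume a b := by
  apply ContinuousOn.intervalIntegrable
  rw [uIcc_of_le hab]
  apply (contOn_piece3.mono (Icc_subset_Icc ha hb)).congr
  intro x hx
  exact fHI_eq3 (by linarith [hx.1]) (by linarith [hx.2])

/-! FTC on each piece -/

lemma int_piece1 {d : ℝ} (h0 : 0 ≤ d) (h1 : d ≤ 1) :
    ∫ x in (0:ℝ)..d, fHI x = F1 d := by
  have hcont : ContinuousOn F1 (Icc 0 d) := by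
    apply Continuous.continuousOn; unfold F1; fun_prop
  have hderiv : ∀ x ∈ Ioo (0:ℝ) d, HasDerivWithinAt F1 (fHI x) (Ioi x) x := by
    intro x hx
    rw [fHI_eq1 hx.1.le (by linarith [hx.2])]
    exact (hasDerivAt_F1 x).hasDerivWithinAt
  rw [intervalIntegral.integral_eq_sub_of_hasDeriv_right_of_le h0 hcont hderiv
    (intgr1 le_rfl h0 h1), F1_zero, sub_zero]

lemma int_piece2 {d : ℝ} (h0 : 1 ≤ d) (h1 : d ≤ Real.sqrt 3) :
    ∫ x in (1:ℝ)..d, fHI x = F2 d - F2 1 := by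
  have hcont : ContinuousOn F2 (Icc 1 d) := by
    have harcsin : ContinuousOn (fun x : ℝ => Real.arcsin (Real.sqrt 3/(2*x))) (Icc 1 d) := by
      apply Real.continuous_arcsin.comp_continuousOn
      apply ContinuousOn.div continuousOn_const (by fun_prop)
      intro x hx
      have := hx.1
      positivity
    unfold F2
    apply ContinuousOn.add
    apply ContinuousOn.sub
    apply ContinuousOn.add
    apply ContinuousOn.add
    · exact (continuousOn_const.mul (by fun_prop)).mul harcsin
    · fun_prop
    · fun_prop
    · exact ((by fun_prop : Continuous fun x : ℝ => (26*x^2+3)/54).continuousOn).mul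
        ((by fun_prop : Continuous fun x : ℝ => Real.sqrt (4*x^2-3)).continuousOn)
    · exact continuousOn_const
  have hderiv : ∀ x ∈ Ioo (1:ℝ) d, HasDerivWithinAt F2 (fHI x) (Ioi x) x := by
    intro x hx
    rw [fHI_eq2 hx.1.le (le_trans hx.2.le h1)]
    exact (hasDerivAt_F2 hx.1).hasDerivWithinAt
  exact intervalIntegral.integral_eq_sub_of_hasDeriv_right_of_le h0 hcont hderiv
    (intgr2 le_rfl h0 h1)

lemma int_piece3 {d : ℝ} (h0 : Real.sqrt 3 ≤ d) (h1 : d ≤ 2) :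
    ∫ x in (Real.sqrt 3)..d, fHI x = F3 d - F3 (Real.sqrt 3) := by
  have hcont : ContinuousOn F3 (Icc (Real.sqrt 3) d) := by
    have harcsin : ContinuousOn (fun x : ℝ => Real.arcsin (Real.sqrt 3/x))
        (Icc (Real.sqrt 3) d) := by
      apply Real.continuous_arcsin.comp_continuousOn
      apply ContinuousOn.div continuousOn_const continuous_id.continuousOn
      intro x hx
      exact ne_of_gt (lt_of_lt_of_le sqrt3_pos hx.1)
    unfold F3
    apply ContinuousOn.add
    apply ContinuousOn.add
    apply ContinuousOn.sub
    apply ContinuousOn.sub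
    · exact (continuousOn_const.mul (by fun_prop)).mul harcsin
    · fun_prop
    · fun_prop
    · exact ((by fun_prop : Continuous fun x : ℝ => (14*x^2+12)/9).continuousOn).mul
        ((by fun_prop : Continuous fun x : ℝ => Real.sqrt (x^2-3)).continuousOn)
    · exact continuousOn_const
  have hderiv : ∀ x ∈ Ioo (Real.sqrt 3) d, HasDerivWithinAt F3 (fHI x) (Ioi x) x := by
    intro x hx
    rw [fHI_eq3 hx.1.le (le_trans hx.2.le h1)]
    exact (hasDerivAt_F3 hx.1).hasDerivWithinAt
  exact intervalIntegral.integral_eq_sub_of_hasDeriv_right_of_le h0 hcont hderiv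
    (intgr3 le_rfl h0 h1)

lemma FHI_eq1 {d : ℝ} (h : d ≤ 1) : FHI d = F1 d := by
  simp only [FHI, if_pos h]; rfl

lemma FHI_eq2 {d : ℝ} (h : 1 < d) (h2 : d ≤ Real.sqrt 3) : FHI d = F2 d := by
  simp only [FHI, not_le.2 h, if_false, if_pos h2]; rfl

lemma FHI_eq3 {d : ℝ} (h : Real.sqrt 3 < d) : FHI d = F3 d := by
  have h1 : ¬ d ≤ 1 := by push_neg; linarith [one_lt_sqrt3]
  simp only [FHI, h1, if_false, not_le.2 h]; rfl

lemma key (d : ℝ) (h0 : 0 ≤ d) (h2 : d ≤ 2) : ∫ x in (0:ℝ)..d, fHI x = FHI d := by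
  rcases le_or_gt d 1 with h | h
  · rw [int_piece1 h0 h, FHI_eq1 h]
  · rcases le_or_gt d (Real.sqrt 3) with hd | hd
    · rw [← intervalIntegral.integral_add_adjacent_intervals
        (intgr1 le_rfl zero_le_one le_rfl) (intgr2 le_rfl h.le hd),
        int_piece1 zero_le_one le_rfl, int_piece2 h.le hd, FHI_eq2 h hd,
        F1_one_eq_F2_one]
      ring
    · rw [← intervalIntegral.integral_add_adjacent_intervals
        (intgr1 le_rfl zero_le_one le_rfl)
        ((intgr2 le_rfl one_lt_sqrt3.le le_rfl).trans (intgr3 le_rfl hd.le h2)),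
        ← intervalIntegral.integral_add_adjacent_intervals
        (intgr2 le_rfl one_lt_sqrt3.le le_rfl) (intgr3 le_rfl hd.le h2),
        int_piece1 zero_le_one le_rfl, int_piece2 one_lt_sqrt3.le le_rfl,
        int_piece3 hd.le h2, FHI_eq3 hd, F1_one_eq_F2_one, F2_s3_eq_F3_s3]
      ring

end Stmt16Aux

/-- F_{H_I} is the antiderivative of f_{H_I} vanishing at 0, and f_{H_I} integrates
to 1 over [0,2]. -/
theorem stmt16 :
    (∀ d : ℝ, 0 ≤ d → d ≤ 2 → ∫ x in (0:ℝ)..d, fHI x = FHI d) ∧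
      ∫ x in (0:ℝ)..2, fHI x = 1 := by
  refine ⟨fun d h0 h2 => Stmt16Aux.key d h0 h2, ?_⟩
  rw [Stmt16Aux.key 2 (by norm_num) le_rfl,
    Stmt16Aux.FHI_eq3 Stmt16Aux.sqrt3_lt_two, Stmt16Aux.F3_two]
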